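/- Let P⃗=(p_1,…,p_m) with 1<p_1,…,p_m<∞ and 1/p = 1/p_1+⋯+1/p_m, and let 0<ε<1. Define the weights w_i(x) = |x|^{(n−ε)(p_i−1)} on ℝ^n for i=1,…,m, and set σ_i = w_i^{1-p_i'}. Then v_{w⃗}(x) = |x|^{(n−ε)(mp−1)}, [w⃗]_{A_{P⃗}} = [v_{w⃗}]_{A_{mp}} ≍ (1/ε)^{mp−1}, and [σ_i]_{A_∞} ≲ 1/ε for each i, with implicit constants depending only on m, n and P⃗. -/

import Mathlib

open MeasureTheory ENNReal Set Function

noncomputable section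

namespace Paper

/-- `ℝⁿ` with the Euclidean norm. -/
abbrev Rn (n : ℕ) : Type := EuclideanSpace ℝ (Fin n)

/-- An axis-parallel half-open cube in `ℝⁿ`. -/
structure Cube (n : ℕ) where
  corner : Rn n
  side : ℝ
  side_pos : 0 < side

/-- The underlying set of a cube. -/
def Cube.set {n : ℕ} (Q : Cube n) : Set (Rn n) :=
  {x | ∀ i, Q.corner i ≤ x i ∧ x i < Q.corner i + Q.side}

/-- The `w`-measure `∫_E w` of a set, for a (real, nonnegative) weight `w`. -/
def wvol {n : ℕ} (w : Rn n → ℝ) (E : Set (Rn n)) : ℝ≥0∞ :=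
  ∫⁻ x in E, ENNReal.ofReal (w x)

/-- The average `(1/|Q|) ∫_Q w` of a weight over a cube. -/
def avg {n : ℕ} (w : Rn n → ℝ) (Q : Cube n) : ℝ≥0∞ :=
  wvol w Q.set / volume Q.set

/-- The Hardy–Littlewood maximal function of a weight. -/
def maximal {n : ℕ} (w : Rn n → ℝ) (x : Rn n) : ℝ≥0∞ :=
  ⨆ (Q : Cube n) (_ : x ∈ Q.set), avg w Q

/-- The Fujii–Wilson `A_∞` constant of a weight. -/
def AinfConst {n : ℕ} (w : Rn n → ℝ) : ℝ≥0∞ :=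
  ⨆ Q : Cube n, (∫⁻ x in Q.set, maximal (Q.set.indicator w) x) / wvol w Q.set

/-- Conjugate exponent `q' = q/(q-1)`. -/
def conj (q : ℝ) : ℝ := q / (q - 1)

/-- The dual weights `σ_i = w_i^{1-p_i'}`. -/
def sigmaW {n m : ℕ} (P : Fin m → ℝ) (w : Fin m → Rn n → ℝ) (i : Fin m) : Rn n → ℝ :=
  fun x => w i x ^ (1 - conj (P i))

/-- The weight `v_{w⃗} = ∏ w_i^{p/p_i}`. -/
def vweight {n m : ℕ} (p : ℝ) (P : Fin m → ℝ) (w : Fin m → Rn n → ℝ) : Rn n → ℝ :=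
  fun x => ∏ i, w i x ^ (p / P i)

/-- The multilinear `A_{P⃗}` constant. -/
def APConst {n m : ℕ} (p : ℝ) (P : Fin m → ℝ) (w : Fin m → Rn n → ℝ) : ℝ≥0∞ :=
  ⨆ Q : Cube n, avg (vweight p P w) Q * ∏ i, avg (sigmaW P w i) Q ^ (p / conj (P i))

/-- The measure `w(x) dx`. -/
def wMeasure {n : ℕ} (w : Rn n → ℝ) : Measure (Rn n) :=
  volume.withDensity fun x => ENNReal.ofReal (w x)

/-- The weighted Lebesgue norm `‖f‖_{L^p(w)}`. -/
def wLpNorm {n : ℕ} (p : ℝ) (w : Rn n → ℝ) (f : Rn n → ℝ) : ℝ≥0∞ :=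
  eLpNorm f (ENNReal.ofReal p) (wMeasure w)

/-- The weighted Lebesgue norm of an `ℝ≥0∞`-valued function. -/
def wLpNormE {n : ℕ} (p : ℝ) (w : Rn n → ℝ) (g : Rn n → ℝ≥0∞) : ℝ≥0∞ :=
  (∫⁻ x, g x ^ p ∂(wMeasure w)) ^ (1 / p)

/-- The weak norm `‖f‖_{L^{p,∞}(w)}`. -/
def wWeakNorm {n : ℕ} (p : ℝ) (w : Rn n → ℝ) (f : Rn n → ℝ) : ℝ≥0∞ :=
  ⨆ (t : ℝ) (_ : 0 < t), ENNReal.ofReal t * wMeasure w {x | t < |f x|} ^ (1 / p)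

/-- The weak norm of an `ℝ≥0∞`-valued function. -/
def wWeakNormE {n : ℕ} (p : ℝ) (w : Rn n → ℝ) (g : Rn n → ℝ≥0∞) : ℝ≥0∞ :=
  ⨆ (t : ℝ) (_ : 0 < t), ENNReal.ofReal t * wMeasure w {x | ENNReal.ofReal t < g x} ^ (1 / p)

/-- A general dyadic grid. -/
def IsDyadicGrid {n : ℕ} (D : Set (Cube n)) : Prop :=
  (∀ Q ∈ D, ∃ k : ℤ, Q.side = 2 ^ k) ∧
  (∀ Q ∈ D, ∀ R ∈ D, Q.set ⊆ R.set ∨ R.set ⊆ Q.set ∨ Q.set ∩ R.set = ∅) ∧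
  (∀ (k : ℤ) (x : Rn n), ∃! Q : Cube n, Q ∈ D ∧ Q.side = 2 ^ k ∧ x ∈ Q.set)

/-- The union `Γ_k` of the cubes of generation `k` of a family. -/
def levelSet {n : ℕ} (S : Set (Cube n)) (lvl : Cube n → ℤ) (k : ℤ) : Set (Rn n) :=
  ⋃ Q ∈ {Q ∈ S | lvl Q = k}, Cube.set Q

/-- A sparse family inside a dyadic grid: the cubes carry generations `lvl` such that cubes of
a fixed generation are pairwise disjoint, `Γ_{k+1} ⊆ Γ_k`, and `|Γ_{k+1} ∩ Q| ≤ |Q|/2`. -/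
def IsSparse {n : ℕ} (D S : Set (Cube n)) : Prop :=
  S ⊆ D ∧ ∃ lvl : Cube n → ℤ,
    (∀ Q ∈ S, ∀ R ∈ S, lvl Q = lvl R → Q ≠ R → Q.set ∩ R.set = ∅) ∧
    (∀ k : ℤ, levelSet S lvl (k + 1) ⊆ levelSet S lvl k) ∧
    (∀ Q ∈ S, volume (levelSet S lvl (lvl Q + 1) ∩ Q.set) ≤ volume Q.set / 2)

/-- The bilinear sparse operator `A_{𝒟,𝒮}`. -/
def sparseOp {n : ℕ} (S : Set (Cube n)) (g₁ g₂ : Rn n → ℝ) (x : Rn n) : ℝ≥0∞ :=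
  ∑' Q : S,
    Set.indicator (Q : Cube n).set
      (fun _ =>
        ((∫⁻ y in (Q : Cube n).set, ENNReal.ofReal (g₁ y)) / volume (Q : Cube n).set) *
        ((∫⁻ y in (Q : Cube n).set, ENNReal.ofReal (g₂ y)) / volume (Q : Cube n).set)) x

/-- The multilinear Hardy–Littlewood maximal function. -/
def multiMaximal {n m : ℕ} (f : Fin m → Rn n → ℝ) (x : Rn n) : ℝ≥0∞ :=
  ⨆ (Q : Cube n) (_ : x ∈ Q.set), ∏ i, (∫⁻ y in Q.set, ENNReal.ofReal |f i y|) / volume Q.set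

/-- The dyadic multilinear maximal function. -/
def multiMaximalD {n m : ℕ} (D : Set (Cube n)) (f : Fin m → Rn n → ℝ) (x : Rn n) : ℝ≥0∞ :=
  ⨆ (Q : Cube n) (_ : Q ∈ D) (_ : x ∈ Q.set),
    ∏ i, (∫⁻ y in Q.set, ENNReal.ofReal |f i y|) / volume Q.set

/-- Bilinear: the dual weight `σ = w^{1-q'}`. -/
def sig {n : ℕ} (q : ℝ) (w : Rn n → ℝ) : Rn n → ℝ := fun x => w x ^ (1 - conj q)

/-- Bilinear: the weight `v = w₁^{p/p₁} w₂^{p/p₂}`. -/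
def vw2 {n : ℕ} (p p₁ p₂ : ℝ) (w₁ w₂ : Rn n → ℝ) : Rn n → ℝ :=
  fun x => w₁ x ^ (p / p₁) * w₂ x ^ (p / p₂)

/-- Bilinear `A_{(p₁,p₂)}` constant. -/
def AP2 {n : ℕ} (p p₁ p₂ : ℝ) (w₁ w₂ : Rn n → ℝ) : ℝ≥0∞ :=
  ⨆ Q : Cube n, avg (vw2 p p₁ p₂ w₁ w₂) Q *
    avg (sig p₁ w₁) Q ^ (p / conj p₁) * avg (sig p₂ w₂) Q ^ (p / conj p₂)

/-- The quantity `σ₁(Q)σ₂(Q)/|Q|²`. -/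
def cubeRatio {n : ℕ} (σ₁ σ₂ : Rn n → ℝ) (Q : Cube n) : ℝ≥0∞ :=
  wvol σ₁ Q.set * wvol σ₂ Q.set / volume Q.set ^ 2

/-- The auxiliary operator `𝒜 = Σ_{Q∈𝒬} (σ₁(Q)σ₂(Q)/|Q|²) χ_Q`. -/
def sparseA {n : ℕ} (𝒬 : Set (Cube n)) (σ₁ σ₂ : Rn n → ℝ) (x : Rn n) : ℝ≥0∞ :=
  ∑' Q : 𝒬, Set.indicator (Q : Cube n).set (fun _ => cubeRatio σ₁ σ₂ Q) x

/-- The linear `A_r` constant (for a real exponent `1 < r < ∞`). -/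
def ArConst {n : ℕ} (r : ℝ) (w : Rn n → ℝ) : ℝ≥0∞ :=
  ⨆ Q : Cube n, avg w Q * avg (fun x => w x ^ (1 - conj r)) Q ^ (r - 1)

/-- An `m`-linear Calderón–Zygmund kernel with constants `A`, `ε`. -/
structure IsCZKernel (n m : ℕ) (A ε : ℝ) (K : (Fin (m + 1) → Rn n) → ℝ) : Prop where
  size : ∀ y : Fin (m + 1) → Rn n, (∃ k l, y k ≠ y l) →
    |K y| ≤ A / (∑ k, ∑ l, dist (y k) (y l)) ^ ((m * n : ℕ) : ℝ)
  smooth : ∀ (y : Fin (m + 1) → Rn n) (i : Fin (m + 1)) (y' : Rn n),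
    (∃ k l, y k ≠ y l) →
    dist (y i) y' ≤ (1 / 2) * ⨆ k, dist (y i) (y k) →
    |K y - K (Function.update y i y')| ≤
      A * dist (y i) y' ^ ε / (∑ k, ∑ l, dist (y k) (y l)) ^ (((m * n : ℕ) : ℝ) + ε)

/-- An `m`-linear Calderón–Zygmund operator with kernel constants `A`, `ε`: it is multilinear,
bounded on some product of Lebesgue spaces, and is represented off the support by integration
against a Calderón–Zygmund kernel. -/
structure IsCZO (n m : ℕ) (A ε : ℝ) (T : (Fin m → Rn n → ℝ) → Rn n → ℝ) : Prop where
  map_add : ∀ (f : Fin m → Rn n → ℝ) (i : Fin m) (g h : Rn n → ℝ),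
    T (Function.update f i (g + h)) = T (Function.update f i g) + T (Function.update f i h)
  map_smul : ∀ (f : Fin m → Rn n → ℝ) (i : Fin m) (c : ℝ) (g : Rn n → ℝ),
    T (Function.update f i (c • g)) = c • T (Function.update f i g)
  bounded : ∃ (q : Fin m → ℝ) (C : ℝ), (∀ i, 1 ≤ q i) ∧
    ∀ f : Fin m → Rn n → ℝ,
      eLpNorm (T f) (ENNReal.ofReal (1 / ∑ i, 1 / q i)) volume ≤
        ENNReal.ofReal C * ∏ i, eLpNorm (f i) (ENNReal.ofReal (q i)) volume
  kernel : ∃ K : (Fin (m + 1) → Rn n) → ℝ, IsCZKernel n m A ε K ∧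
    ∀ f : Fin m → Rn n → ℝ, (∀ i, Measurable (f i)) → (∀ i, HasCompactSupport (f i)) →
      (∀ i, ∃ M : ℝ, ∀ x, |f i x| ≤ M) →
      ∀ x, x ∉ ⋂ i, tsupport (f i) →
        T f x = ∫ y : Fin m → Rn n, K (Fin.cons x y) * ∏ i, f i (y i)


lemma Cube.set_eq {n : ℕ} (Q : Cube n) :
    Q.set = (MeasurableEquiv.toLp 2 (Fin n → ℝ)).symm ⁻¹'
      (Set.univ.pi fun i => Ico (Q.corner i) (Q.corner i + Q.side)) := by
  ext x
  simp [Cube.set, Set.mem_pi, MeasurableEquiv.toLp_symm_apply]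

lemma Cube.measurableSet {n : ℕ} (Q : Cube n) : MeasurableSet Q.set := by
  rw [Cube.set_eq]
  exact (MeasurableEquiv.measurable _) (MeasurableSet.univ_pi fun i => measurableSet_Ico)

lemma Cube.volume_set {n : ℕ} (Q : Cube n) :
    volume Q.set = ENNReal.ofReal (Q.side ^ n) := by
  rw [Cube.set_eq,
    (EuclideanSpace.volume_preserving_symm_measurableEquiv_toLp (Fin n)).measure_preimage
      ((MeasurableSet.univ_pi fun i => measurableSet_Ico).nullMeasurableSet)]
  rw [volume_pi_pi]
  simp [Real.volume_Ico, ENNReal.ofReal_pow Q.side_pos.le]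


lemma abs_coord_le_norm {n : ℕ} (x : Rn n) (i : Fin n) : |x i| ≤ ‖x‖ := by
  rw [EuclideanSpace.norm_eq]
  rw [← Real.sqrt_sq (abs_nonneg (x i))]
  apply Real.sqrt_le_sqrt
  rw [sq_abs]
  calc x i ^ 2 = ‖x i‖ ^ 2 := by rw [Real.norm_eq_abs, sq_abs]
  _ ≤ ∑ j, ‖x j‖ ^ 2 := Finset.single_le_sum (f := fun j => ‖x j‖ ^ 2)
      (fun j _ => sq_nonneg _) (Finset.mem_univ i)

lemma norm_le_sqrt_mul {n : ℕ} (x : Rn n) (s : ℝ) (hs : 0 ≤ s) (h : ∀ i, |x i| ≤ s) :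
    ‖x‖ ≤ Real.sqrt n * s := by
  rw [EuclideanSpace.norm_eq]
  have : ∑ j, ‖x j‖ ^ 2 ≤ ∑ _j : Fin n, s ^ 2 := by
    apply Finset.sum_le_sum
    intro j _
    rw [Real.norm_eq_abs]
    exact pow_le_pow_left₀ (abs_nonneg _) (h j) 2
  calc Real.sqrt (∑ j, ‖x j‖ ^ 2) ≤ Real.sqrt (∑ _j : Fin n, s ^ 2) := Real.sqrt_le_sqrt this
  _ = Real.sqrt (n * s ^ 2) := by rw [Finset.sum_const, Finset.card_univ, Fintype.card_fin,
      nsmul_eq_mul]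
  _ = Real.sqrt n * s := by
      rw [Real.sqrt_mul (Nat.cast_nonneg n), Real.sqrt_sq hs]

lemma Cube.norm_sub_corner_lt {n : ℕ} (hn : 0 < n) (Q : Cube n) {x : Rn n} (hx : x ∈ Q.set) :
    ‖x - Q.corner‖ < Real.sqrt n * Q.side := by
  have h1 : ∀ i, |x i - Q.corner i| < Q.side := by
    intro i
    rcases hx i with ⟨h2, h3⟩
    rw [abs_lt]; constructor <;> nlinarith [Q.side_pos]
  -- strict: use n > 0
  rw [EuclideanSpace.norm_eq]
  have hsum : ∑ j, ‖(x - Q.corner) j‖ ^ 2 < ∑ _j : Fin n, Q.side ^ 2 := by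
    apply Finset.sum_lt_sum_of_nonempty
    · exact Finset.univ_nonempty_iff.mpr ⟨⟨0, hn⟩⟩
    intro j _
    have := h1 j
    have hj : (x - Q.corner) j = x j - Q.corner j := by
      simp [PiLp.sub_apply]
    rw [hj, Real.norm_eq_abs]
    exact pow_lt_pow_left₀ (h1 j) (abs_nonneg _) two_ne_zero
  have h4 : Real.sqrt (∑ j, ‖(x - Q.corner) j‖ ^ 2) < Real.sqrt (∑ _j : Fin n, Q.side ^ 2) := by
    apply Real.sqrt_lt_sqrt (Finset.sum_nonneg fun j _ => sq_nonneg _) hsum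
  calc Real.sqrt (∑ j, ‖(x - Q.corner) j‖ ^ 2) < Real.sqrt (∑ _j : Fin n, Q.side ^ 2) := h4
  _ = Real.sqrt n * Q.side := by
      rw [Finset.sum_const, Finset.card_univ, Fintype.card_fin, nsmul_eq_mul,
        Real.sqrt_mul (Nat.cast_nonneg n), Real.sqrt_sq Q.side_pos.le]

/-- The natural "outer radius" of a cube. -/
def Cube.R {n : ℕ} (Q : Cube n) : ℝ := ‖Q.corner‖ + Real.sqrt n * Q.side

lemma Cube.R_pos {n : ℕ} (hn : 0 < n) (Q : Cube n) : 0 < Q.R := by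
  have : (0:ℝ) < Real.sqrt n := Real.sqrt_pos.mpr (by exact_mod_cast hn)
  have := Q.side_pos
  have := norm_nonneg Q.corner
  unfold Cube.R; nlinarith

lemma Cube.norm_lt_R {n : ℕ} (hn : 0 < n) (Q : Cube n) {x : Rn n} (hx : x ∈ Q.set) :
    ‖x‖ < Q.R := by
  have h := Q.norm_sub_corner_lt hn hx
  calc ‖x‖ = ‖Q.corner + (x - Q.corner)‖ := by rw [add_sub_cancel]
  _ ≤ ‖Q.corner‖ + ‖x - Q.corner‖ := norm_add_le _ _
  _ < Q.R := by unfold Cube.R; linarith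

lemma Cube.R_le_norm_of_far {n : ℕ} (Q : Cube n) {x : Rn n} (hx : x ∈ Q.set)
    (hfar : 2 * (Real.sqrt n * Q.side) ≤ ‖Q.corner‖) (hn : 0 < n) : Q.R / 3 ≤ ‖x‖ := by
  have h := Q.norm_sub_corner_lt hn hx
  have h2 : ‖Q.corner‖ - ‖x - Q.corner‖ ≤ ‖x‖ := by
    have := norm_sub_norm_le Q.corner x
    have h3 : ‖Q.corner - x‖ = ‖x - Q.corner‖ := norm_sub_rev _ _
    linarith
  have hs : 0 < Real.sqrt n * Q.side := by
    have : (0:ℝ) < Real.sqrt n := Real.sqrt_pos.mpr (by exact_mod_cast hn)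
    nlinarith [Q.side_pos]
  unfold Cube.R
  nlinarith


lemma rpow_neg_anti {u v b : ℝ} (hu : 0 < u) (huv : u ≤ v) (hb : 0 ≤ b) :
    v ^ (-b) ≤ u ^ (-b) := by
  rw [Real.rpow_neg (hu.trans_le huv).le, Real.rpow_neg hu.le]
  exact inv_anti₀ (Real.rpow_pos_of_pos hu _) (Real.rpow_le_rpow hu.le huv hb)

/-- Any set within distance `r` of the origin fits in a cube of side `2r`. -/
lemma volume_norm_lt_le {n : ℕ} (r : ℝ) (hr : 0 < r) :
    volume {x : Rn n | ‖x‖ < r} ≤ ENNReal.ofReal ((2 * r) ^ n) := by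
  have hsub : {x : Rn n | ‖x‖ < r} ⊆
      (Cube.mk (WithLp.toLp 2 (fun _ => -r : Fin n → ℝ)) (2 * r) (by positivity)).set := by
    intro x hx i
    have h1 := abs_coord_le_norm x i
    have h2 : |x i| < r := lt_of_le_of_lt h1 hx
    rw [abs_lt] at h2
    constructor
    · exact le_of_lt h2.1
    · show x i < -r + 2 * r
      linarith [h2.2]
  calc volume {x : Rn n | ‖x‖ < r} ≤ volume (Cube.mk (WithLp.toLp 2 (fun _ => -r : Fin n → ℝ)) (2*r)
        (by positivity)).set := measure_mono hsub
  _ = ENNReal.ofReal ((2 * r) ^ n) := Cube.volume_set _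

lemma volume_singleton_zero {n : ℕ} (hn : 0 < n) : volume ({0} : Set (Rn n)) = 0 := by
  haveI : Nontrivial (Rn n) := ⟨0, EuclideanSpace.single ⟨0, hn⟩ 1, by
    intro h
    have := congrFun (congrArg WithLp.ofLp h.symm) ⟨0, hn⟩
    simp [EuclideanSpace.single_apply] at this⟩
  exact measure_singleton 0

/-- The constant in the key estimate. -/
def Kn (n : ℕ) : ℝ := (3 * 2 ^ (2 * n) + 3 ^ n) * (3 * Real.sqrt n) ^ n

lemma Kn_pos {n : ℕ} (hn : 0 < n) : 0 < Kn n := by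
  have h1 : (0:ℝ) < Real.sqrt n := Real.sqrt_pos.mpr (by exact_mod_cast hn)
  unfold Kn; positivity

lemma one_le_sqrt {n : ℕ} (hn : 0 < n) : (1:ℝ) ≤ Real.sqrt n := by
  rw [show (1:ℝ) = Real.sqrt 1 by simp]
  exact Real.sqrt_le_sqrt (by exact_mod_cast hn)

lemma three_pow_le_Kn {n : ℕ} (hn : 0 < n) : (3:ℝ) ^ n ≤ Kn n := by
  have h1 : (1:ℝ) ≤ 3 * Real.sqrt n := by nlinarith [one_le_sqrt hn]
  have h2 : (1:ℝ) ≤ (3 * Real.sqrt n) ^ n := one_le_pow₀ h1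
  unfold Kn
  nlinarith [pow_pos (show (0:ℝ) < 3 by norm_num) n, pow_pos (show (0:ℝ) < 2 by norm_num) (2*n),
    pow_nonneg (show (0:ℝ) ≤ 3 by norm_num) n]

/-- Key geometric-series bound: for `0 < c < 1`, `(2^c)⁻¹ ≤ 1 - c/3`. -/
lemma inv_two_rpow_le {c : ℝ} (hc0 : 0 < c) (hc1 : c < 1) :
    ((2:ℝ) ^ c)⁻¹ ≤ 1 - c / 3 := by
  have hlog : (0.6931471803:ℝ) < Real.log 2 := Real.log_two_gt_d9
  have h2c : 1 + c * Real.log 2 ≤ (2:ℝ) ^ c := by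
    rw [Real.rpow_def_of_pos (by norm_num : (0:ℝ) < 2)]
    have := Real.add_one_le_exp (Real.log 2 * c)
    linarith [this, mul_comm (Real.log 2) c]
  have hpos : (0:ℝ) < 1 + c * Real.log 2 := by nlinarith
  have h1 : ((2:ℝ) ^ c)⁻¹ ≤ (1 + c * Real.log 2)⁻¹ := by
    apply inv_anti₀ hpos h2c
  have h2 : (1 + c * Real.log 2)⁻¹ ≤ 1 - c / 3 := by
    rw [inv_eq_one_div, div_le_iff₀ hpos]
    have key : 0 ≤ c * (Real.log 2 - 1/3 - c * Real.log 2 / 3) := by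
      apply mul_nonneg hc0.le
      nlinarith [mul_lt_mul_of_pos_right hc1 (show (0:ℝ) < Real.log 2 by linarith)]
    nlinarith [key]
  linarith


lemma shell_cover {n : ℕ} (hn : 0 < n) (Q : Cube n) :
    Q.set ⊆ {(0:Rn n)} ∪ ⋃ k : ℕ, {x : Rn n | Q.R / 2 ^ (k+1) ≤ ‖x‖ ∧ ‖x‖ < Q.R / 2 ^ k} := by
  intro x hx
  by_cases hx0 : x = 0
  · exact Or.inl hx0
  right
  have h0 : 0 < ‖x‖ := norm_pos_iff.mpr hx0
  have hR : ‖x‖ < Q.R := Q.norm_lt_R hn hx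
  have hex : ∃ k : ℕ, Q.R / 2 ^ (k+1) ≤ ‖x‖ := by
    obtain ⟨k, hk⟩ := pow_unbounded_of_one_lt (Q.R / ‖x‖) (by norm_num : (1:ℝ) < 2)
    refine ⟨k, ?_⟩
    rw [div_le_iff₀ (by positivity)]
    rw [div_lt_iff₀ h0] at hk
    have h2 : (2:ℝ) ^ k ≤ 2 ^ (k+1) := by
      apply pow_le_pow_right₀ (by norm_num) (by omega)
    nlinarith
  refine mem_iUnion.mpr ⟨Nat.find hex, Nat.find_spec hex, ?_⟩
  rcases h : Nat.find hex with _ | j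
  · simpa using hR
  · have hmin := Nat.find_min hex (m := j) (by omega)
    exact not_le.mp hmin

/-- **Key estimate.** For `n-1 < b < n`, the integral of `‖x‖^{-b}` over a cube `Q` is at most
`Kn/(n-b) ⋅ R^{-b} ⋅ |Q|` where `R = ‖corner‖ + √n ⋅ side`. -/
lemma wvol_rpow_neg_le {n : ℕ} (hn : 0 < n) {b : ℝ} (hb1 : (n:ℝ) - 1 < b) (hb2 : b < n)
    (Q : Cube n) :
    wvol (fun x => ‖x‖ ^ (-b)) Q.set ≤
      ENNReal.ofReal (Kn n / ((n:ℝ) - b)) * ENNReal.ofReal (Q.R ^ (-b)) * volume Q.set := by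
  have hn1 : (1:ℝ) ≤ n := by exact_mod_cast hn
  have hb0 : 0 ≤ b := by linarith
  set c : ℝ := (n:ℝ) - b with hc
  have hc0 : 0 < c := by simp only [hc]; linarith
  have hc1 : c < 1 := by simp only [hc]; linarith
  have hRpos : 0 < Q.R := Q.R_pos hn
  have hsq : (0:ℝ) < Real.sqrt n := Real.sqrt_pos.mpr (by exact_mod_cast hn)
  by_cases hfar : 2 * (Real.sqrt n * Q.side) ≤ ‖Q.corner‖
  · -- far case: pointwise bound
    have hpt : ∀ x ∈ Q.set, ENNReal.ofReal (‖x‖ ^ (-b)) ≤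
        ENNReal.ofReal ((Q.R / 3) ^ (-b)) := by
      intro x hx
      exact ENNReal.ofReal_le_ofReal
        (rpow_neg_anti (div_pos hRpos (by norm_num)) (Q.R_le_norm_of_far hx hfar hn) hb0)
    calc wvol (fun x => ‖x‖ ^ (-b)) Q.set
        ≤ ∫⁻ _x in Q.set, ENNReal.ofReal ((Q.R / 3) ^ (-b)) :=
          setLIntegral_mono measurable_const hpt
      _ = ENNReal.ofReal ((Q.R / 3) ^ (-b)) * volume Q.set := setLIntegral_const _ _
      _ ≤ ENNReal.ofReal (Kn n / c) * ENNReal.ofReal (Q.R ^ (-b)) * volume Q.set := by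
          apply mul_le_mul_left
          rw [← ENNReal.ofReal_mul (div_nonneg (Kn_pos hn).le hc0.le)]
          apply ENNReal.ofReal_le_ofReal
          have h1 : (Q.R / 3 : ℝ) ^ (-b) = 3 ^ b * Q.R ^ (-b) := by
            rw [div_eq_mul_inv, mul_comm, Real.mul_rpow (by norm_num) hRpos.le,
              Real.inv_rpow (by norm_num), ← Real.rpow_neg (by norm_num), neg_neg]
          rw [h1]
          apply mul_le_mul_of_nonneg_right _ (Real.rpow_nonneg hRpos.le _)
          calc (3:ℝ) ^ b ≤ 3 ^ (n:ℝ) :=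
              Real.rpow_le_rpow_of_exponent_le (by norm_num) hb2.le
            _ = 3 ^ n := Real.rpow_natCast 3 n
            _ ≤ Kn n := three_pow_le_Kn hn
            _ ≤ Kn n / c := by
                rw [le_div_iff₀ hc0]
                nlinarith [Kn_pos hn]
  · -- near case: dyadic shells
    push_neg at hfar
    have hside : Q.R < 3 * (Real.sqrt n * Q.side) := by
      unfold Cube.R; nlinarith [Q.side_pos]
    set Sh : ℕ → Set (Rn n) :=
      fun k => {x : Rn n | Q.R / 2 ^ (k+1) ≤ ‖x‖ ∧ ‖x‖ < Q.R / 2 ^ k} with hSh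
    have hcover := shell_cover hn Q
    have step1 : wvol (fun x => ‖x‖ ^ (-b)) Q.set ≤
        ∑' k : ℕ, ∫⁻ x in Sh k, ENNReal.ofReal (‖x‖ ^ (-b)) := by
      calc wvol (fun x => ‖x‖ ^ (-b)) Q.set
          ≤ ∫⁻ x in ({(0:Rn n)} ∪ ⋃ k : ℕ, Sh k), ENNReal.ofReal (‖x‖ ^ (-b)) :=
            lintegral_mono_set hcover
        _ ≤ (∫⁻ x in ({(0:Rn n)} : Set (Rn n)), ENNReal.ofReal (‖x‖ ^ (-b)))
            + ∫⁻ x in (⋃ k : ℕ, Sh k), ENNReal.ofReal (‖x‖ ^ (-b)) :=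
            lintegral_union_le _ _ _
        _ ≤ 0 + ∑' k : ℕ, ∫⁻ x in Sh k, ENNReal.ofReal (‖x‖ ^ (-b)) := by
            apply add_le_add
            · rw [setLIntegral_measure_zero _ _ (volume_singleton_zero hn)]
            · exact lintegral_iUnion_le _ _
        _ = ∑' k : ℕ, ∫⁻ x in Sh k, ENNReal.ofReal (‖x‖ ^ (-b)) := zero_add _
    have step2 : ∀ k : ℕ, ∫⁻ x in Sh k, ENNReal.ofReal (‖x‖ ^ (-b)) ≤
        ENNReal.ofReal (2 ^ ((n:ℝ) + b) * Q.R ^ c) * ENNReal.ofReal (((2:ℝ) ^ c)⁻¹) ^ k := by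
      intro k
      have ht : (0:ℝ) < Q.R / 2 ^ k := by positivity
      have hpt : ∀ x ∈ Sh k, ENNReal.ofReal (‖x‖ ^ (-b)) ≤
          ENNReal.ofReal ((Q.R / 2 ^ (k+1)) ^ (-b)) := by
        intro x hx
        exact ENNReal.ofReal_le_ofReal (rpow_neg_anti (div_pos hRpos (by positivity)) hx.1 hb0)
      have hvol : volume (Sh k) ≤ ENNReal.ofReal ((2 * (Q.R / 2 ^ k)) ^ n) := by
        refine le_trans (measure_mono ?_) (volume_norm_lt_le _ ht)
        intro x hx; exact hx.2
      calc ∫⁻ x in Sh k, ENNReal.ofReal (‖x‖ ^ (-b))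
          ≤ ∫⁻ _x in Sh k, ENNReal.ofReal ((Q.R / 2 ^ (k+1)) ^ (-b)) :=
            setLIntegral_mono measurable_const hpt
        _ = ENNReal.ofReal ((Q.R / 2 ^ (k+1)) ^ (-b)) * volume (Sh k) := setLIntegral_const _ _
        _ ≤ ENNReal.ofReal ((Q.R / 2 ^ (k+1)) ^ (-b)) * ENNReal.ofReal ((2 * (Q.R / 2 ^ k)) ^ n) :=
            mul_le_mul_right hvol _
        _ = ENNReal.ofReal ((Q.R / 2 ^ (k+1)) ^ (-b) * (2 * (Q.R / 2 ^ k)) ^ n) :=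
            (ENNReal.ofReal_mul (Real.rpow_nonneg (by positivity) _)).symm
        _ ≤ ENNReal.ofReal (2 ^ ((n:ℝ) + b) * Q.R ^ c) * ENNReal.ofReal (((2:ℝ) ^ c)⁻¹) ^ k := by
            rw [← ENNReal.ofReal_pow (by positivity),
              ← ENNReal.ofReal_mul (mul_nonneg (Real.rpow_nonneg (by norm_num) _)
                (Real.rpow_nonneg hRpos.le _))]
            apply ENNReal.ofReal_le_ofReal
            apply le_of_eq
            have e1 : (Q.R / 2 ^ (k+1) : ℝ) ^ (-b) = (Q.R / 2 ^ k) ^ (-b) * 2 ^ b := by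
              have h2 : (Q.R / 2 ^ (k+1) : ℝ) = (Q.R / 2 ^ k) * 2⁻¹ := by
                rw [pow_succ]; ring
              rw [h2, Real.mul_rpow ht.le (by norm_num),
                Real.inv_rpow (by norm_num), ← Real.rpow_neg (by norm_num), neg_neg]
            have e2 : ((2:ℝ) * (Q.R / 2 ^ k)) ^ n = 2 ^ n * (Q.R / 2 ^ k) ^ n :=
              mul_pow 2 _ n
            have e3 : ((Q.R / 2 ^ k) : ℝ) ^ (-b) * (Q.R / 2 ^ k) ^ n = (Q.R / 2 ^ k) ^ c := by
              rw [← Real.rpow_natCast (Q.R / 2 ^ k) n, ← Real.rpow_add ht]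
              congr 1
              simp only [hc]; ring
            have e4 : ((Q.R / 2 ^ k) : ℝ) ^ c = Q.R ^ c * (((2:ℝ) ^ c)⁻¹) ^ k := by
              rw [Real.div_rpow hRpos.le (by positivity), ← Real.rpow_natCast (2:ℝ) k,
                ← Real.rpow_mul (by norm_num), mul_comm (k:ℝ) c,
                Real.rpow_mul (by norm_num : (0:ℝ) ≤ 2), Real.rpow_natCast, div_eq_mul_inv,
                inv_pow]
            have e5 : (2:ℝ) ^ ((n:ℝ) + b) = 2 ^ n * 2 ^ b := by
              rw [Real.rpow_add (by norm_num), Real.rpow_natCast]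
            rw [e1, e2, e5]
            calc (Q.R / 2 ^ k) ^ (-b) * 2 ^ b * (2 ^ n * (Q.R / 2 ^ k) ^ n)
                = 2 ^ n * 2 ^ b * ((Q.R / 2 ^ k) ^ (-b) * (Q.R / 2 ^ k) ^ n) := by ring
              _ = 2 ^ n * 2 ^ b * (Q.R ^ c * ((2:ℝ) ^ c)⁻¹ ^ k) := by rw [e3, e4]
              _ = 2 ^ n * 2 ^ b * Q.R ^ c * ((2:ℝ) ^ c)⁻¹ ^ k := by ring
    have step3 : (∑' k : ℕ, ENNReal.ofReal (((2:ℝ) ^ c)⁻¹) ^ k) ≤ ENNReal.ofReal (3 / c) := by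
      rw [ENNReal.tsum_geometric]
      have h1 : ENNReal.ofReal (((2:ℝ) ^ c)⁻¹) ≤ ENNReal.ofReal (1 - c/3) :=
        ENNReal.ofReal_le_ofReal (inv_two_rpow_le hc0 hc1)
      have h2 : ENNReal.ofReal (c/3) ≤ 1 - ENNReal.ofReal (((2:ℝ) ^ c)⁻¹) := by
        have h3 : ENNReal.ofReal (c/3) = 1 - ENNReal.ofReal (1 - c/3) := by
          rw [← ENNReal.ofReal_one, ← ENNReal.ofReal_sub _ (by linarith)]
          norm_num
        rw [h3]
        exact tsub_le_tsub_left h1 _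
      calc (1 - ENNReal.ofReal (((2:ℝ) ^ c)⁻¹))⁻¹ ≤ (ENNReal.ofReal (c/3))⁻¹ :=
          ENNReal.inv_le_inv' h2
        _ = ENNReal.ofReal (3 / c) := by
            rw [← ENNReal.ofReal_inv_of_pos (by positivity)]
            congr 1
            field_simp
    calc wvol (fun x => ‖x‖ ^ (-b)) Q.set
        ≤ ∑' k : ℕ, ∫⁻ x in Sh k, ENNReal.ofReal (‖x‖ ^ (-b)) := step1
      _ ≤ ∑' k : ℕ, ENNReal.ofReal (2 ^ ((n:ℝ) + b) * Q.R ^ c) *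
            ENNReal.ofReal (((2:ℝ) ^ c)⁻¹) ^ k := ENNReal.tsum_le_tsum step2
      _ = ENNReal.ofReal (2 ^ ((n:ℝ) + b) * Q.R ^ c) *
            ∑' k : ℕ, ENNReal.ofReal (((2:ℝ) ^ c)⁻¹) ^ k := ENNReal.tsum_mul_left
      _ ≤ ENNReal.ofReal (2 ^ ((n:ℝ) + b) * Q.R ^ c) * ENNReal.ofReal (3 / c) :=
          mul_le_mul_right step3 _
      _ ≤ ENNReal.ofReal (Kn n / c) * ENNReal.ofReal (Q.R ^ (-b)) * volume Q.set := by
          rw [Q.volume_set]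
          have hRc : (0:ℝ) ≤ Q.R ^ c := Real.rpow_nonneg hRpos.le c
          have hRb' : (0:ℝ) ≤ Q.R ^ (-b) := Real.rpow_nonneg hRpos.le _
          have h01 : (0:ℝ) ≤ Kn n / c := div_nonneg (Kn_pos hn).le hc0.le
          rw [← ENNReal.ofReal_mul (mul_nonneg (Real.rpow_nonneg (by norm_num) _) hRc),
            ← ENNReal.ofReal_mul h01, ← ENNReal.ofReal_mul (mul_nonneg h01 hRb')]
          apply ENNReal.ofReal_le_ofReal
          have hsidegt : Q.R / (3 * Real.sqrt n) < Q.side := by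
            rw [div_lt_iff₀ (by positivity)]
            nlinarith
          have hsn : (Q.R / (3 * Real.sqrt n)) ^ n ≤ Q.side ^ n :=
            pow_le_pow_left₀ (by positivity) hsidegt.le n
          have hRb : Q.R ^ (-b) * Q.R ^ (n:ℕ) = Q.R ^ c := by
            rw [← Real.rpow_natCast Q.R n, ← Real.rpow_add hRpos]
            congr 1
            simp only [hc]; ring
          have hdiv : (Q.R / (3 * Real.sqrt n)) ^ n = Q.R ^ n / (3 * Real.sqrt n) ^ n :=
            div_pow _ _ n
          have h2nb : (2:ℝ) ^ ((n:ℝ) + b) ≤ 2 ^ (2*n : ℕ) := by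
            rw [← Real.rpow_natCast 2 (2*n)]
            apply Real.rpow_le_rpow_of_exponent_le (by norm_num)
            push_cast
            linarith
          have hKey : Kn n / c * Q.R ^ (-b) * (Q.R ^ n / (3 * Real.sqrt n) ^ n) =
              (3 * 2 ^ (2*n) + 3 ^ n) / c * Q.R ^ c := by
            have h3 : ((3:ℝ) * Real.sqrt n) ^ n ≠ 0 := by positivity
            rw [← hRb]
            unfold Kn
            field_simp
          calc 2 ^ ((n:ℝ) + b) * Q.R ^ c * (3 / c)
              = 3 * 2 ^ ((n:ℝ) + b) * Q.R ^ c / c := by ring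
            _ ≤ 3 * 2 ^ (2*n : ℕ) * Q.R ^ c / c := by gcongr
            _ ≤ (3 * 2 ^ (2*n) + 3 ^ n) / c * Q.R ^ c := by
                rw [div_mul_eq_mul_div]
                gcongr ?_ / c
                nlinarith [pow_nonneg (show (0:ℝ) ≤ 3 by norm_num) n, hRc]
            _ = Kn n / c * Q.R ^ (-b) * (Q.R ^ n / (3 * Real.sqrt n) ^ n) := hKey.symm
            _ ≤ Kn n / c * Q.R ^ (-b) * Q.side ^ n := by
                apply mul_le_mul_of_nonneg_left _ (mul_nonneg h01 hRb')
                rw [hdiv] at hsn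
                exact hsn


lemma meas_sigma {n : ℕ} (b : ℝ) :
    Measurable fun x : Rn n => ENNReal.ofReal (‖x‖ ^ (-b)) :=
  (measurable_norm.pow measurable_const).ennreal_ofReal

lemma sqrt_le_two_pow {n : ℕ} (hn : 0 < n) : Real.sqrt n ≤ 2 ^ n := by
  have h1 : Real.sqrt n ≤ n := by
    have hn1 : (1:ℝ) ≤ n := by exact_mod_cast hn
    calc Real.sqrt n ≤ Real.sqrt ((n:ℝ)^2) := Real.sqrt_le_sqrt (by nlinarith)
    _ = n := Real.sqrt_sq (by positivity)
  have h2 : (n:ℝ) ≤ 2 ^ n := by exact_mod_cast (Nat.lt_two_pow_self (n := n)).le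
  linarith

/-- The unit cube. -/
def unitCube (n : ℕ) : Cube n := ⟨0, 1, one_pos⟩

/-- Lower bound for the integral of `‖x‖^(-b)` over the unit cube. -/
lemma wvol_unit_lower {n : ℕ} (hn : 0 < n) {b : ℝ} (hb0 : 0 ≤ b) (hb2 : b < n) :
    ENNReal.ofReal ((1 / 2 ^ ((n+1)*n)) * (1 / ((n:ℝ) - b))) ≤
      wvol (fun x => ‖x‖ ^ (-b)) (unitCube n).set := by
  set c : ℝ := (n:ℝ) - b with hc
  have hc0 : 0 < c := by simp only [hc]; linarith
  set i0 : Fin n := ⟨0, hn⟩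
  set T : ℕ → Cube n := fun k =>
    ⟨WithLp.toLp 2 (fun i => if i = i0 then 1 / 2 ^ (k+n+1) else 0 : Fin n → ℝ), 1 / 2 ^ (k+n+1),
      by positivity⟩ with hT
  have corner_apply : ∀ k i, (T k).corner i = if i = i0 then (1:ℝ)/2^(k+n+1) else 0 :=
    fun k i => rfl
  have side_apply : ∀ k, (T k).side = (1:ℝ)/2^(k+n+1) := fun k => rfl
  have corner_nonneg : ∀ k i, (0:ℝ) ≤ (T k).corner i := by
    intro k i
    rw [corner_apply]
    split_ifs <;> positivity
  have corner_le : ∀ k i, (T k).corner i ≤ 1/2^(k+n+1) := by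
    intro k i
    rw [corner_apply]
    split_ifs
    · exact le_refl _
    · positivity
  have hTsub : ∀ k, (T k).set ⊆ (unitCube n).set := by
    intro k x hx i
    rcases hx i with ⟨h1, h3⟩
    constructor
    · show (0:ℝ) ≤ x i
      linarith [corner_nonneg k i]
    · show x i < 0 + 1
      have h4 : (1:ℝ) / 2 ^ (k+n+1) + 1 / 2 ^ (k+n+1) ≤ 1 := by
        rw [← add_div, div_le_one (by positivity)]
        calc (1:ℝ) + 1 = 2 ^ 1 := by norm_num
        _ ≤ 2 ^ (k+n+1) := pow_le_pow_right₀ (by norm_num) (by omega)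
      have h5 := corner_le k i
      have h6 := side_apply k
      nlinarith [h3]
  have hnorm_ub : ∀ k, ∀ x ∈ (T k).set, ‖x‖ ≤ 1 / 2 ^ k := by
    intro k x hx
    have h1 : ∀ i, |x i| ≤ 2 / 2 ^ (k+n+1) := by
      intro i
      rcases hx i with ⟨h1, h2⟩
      have hcor0 := corner_nonneg k i
      have hcor := corner_le k i
      have hside := side_apply k
      rw [abs_le]
      constructor
      · have : (0:ℝ) ≤ 2 / 2 ^ (k+n+1) := by positivity
        linarith
      · rw [show (2:ℝ) / 2 ^ (k+n+1) = 1/2^(k+n+1) + 1/2^(k+n+1) by ring]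
        nlinarith
    have h2 := norm_le_sqrt_mul x _ (by positivity) h1
    calc ‖x‖ ≤ Real.sqrt n * (2 / 2 ^ (k+n+1)) := h2
    _ ≤ 2 ^ n * (2 / 2 ^ (k+n+1)) := by
        apply mul_le_mul_of_nonneg_right (sqrt_le_two_pow hn) (by positivity)
    _ = 1 / 2 ^ k := by
        have hp : (2:ℝ)^(k+n+1) = 2^k * 2^n * 2 := by
          rw [pow_add, pow_add, pow_one]
        rw [hp]
        field_simp
  have hnorm_lb : ∀ k, ∀ x ∈ (T k).set, 1 / 2 ^ (k+n+1) ≤ ‖x‖ := by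
    intro k x hx
    rcases hx i0 with ⟨h1, _⟩
    have hcor : (T k).corner i0 = 1 / 2 ^ (k+n+1) := by
      have h9 : (T k).corner i0 = if i0 = i0 then (1:ℝ)/2^(k+n+1) else 0 := rfl
      rw [h9, if_pos rfl]
    calc (1:ℝ) / 2 ^ (k+n+1) = (T k).corner i0 := hcor.symm
    _ ≤ x i0 := h1
    _ ≤ |x i0| := le_abs_self _
    _ ≤ ‖x‖ := abs_coord_le_norm x i0
  -- pointwise bound on T k
  have hpt : ∀ k, ∀ x ∈ (T k).set,
      ENNReal.ofReal (((2:ℝ) ^ k) ^ b) ≤ ENNReal.ofReal (‖x‖ ^ (-b)) := by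
    intro k x hx
    apply ENNReal.ofReal_le_ofReal
    have h0 : (0:ℝ) < ‖x‖ := lt_of_lt_of_le (by positivity) (hnorm_lb k x hx)
    have h2 : ((1:ℝ) / 2 ^ k) ^ (-b) ≤ ‖x‖ ^ (-b) :=
      rpow_neg_anti h0 (hnorm_ub k x hx) hb0
    have h3 : ((1:ℝ) / 2 ^ k) ^ (-b) = ((2:ℝ) ^ k) ^ b := by
      rw [one_div, Real.inv_rpow (by positivity), ← Real.rpow_neg (by positivity), neg_neg]
    linarith [h2, h3.symm.le]
  -- disjointness
  have hdisj : Pairwise (Disjoint on fun k => (T k).set) := by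
    intro k j hkj
    wlog hlt : k < j generalizing k j
    · exact (this hkj.symm (by omega)).symm
    apply Set.disjoint_left.mpr
    intro x hxk hxj
    obtain ⟨hk1, -⟩ := hxk i0
    obtain ⟨-, hj2⟩ := hxj i0
    have e1 : (T k).corner i0 = 1 / 2 ^ (k+n+1) := by
      have h9 : (T k).corner i0 = if i0 = i0 then (1:ℝ)/2^(k+n+1) else 0 := rfl
      rw [h9, if_pos rfl]
    have e2 : (T j).corner i0 = 1 / 2 ^ (j+n+1) := by
      have h9 : (T j).corner i0 = if i0 = i0 then (1:ℝ)/2^(j+n+1) else 0 := rfl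
      rw [h9, if_pos rfl]
    have e3 : (T k).side = 1 / 2 ^ (k+n+1) := rfl
    have e4 : (T j).side = 1 / 2 ^ (j+n+1) := rfl
    rw [e1] at hk1
    rw [e2, e4] at hj2
    have h4 : (1:ℝ)/2^(j+n+1) + 1/2^(j+n+1) ≤ 1/2^(k+n+1) := by
      rw [← add_div, div_le_div_iff₀ (by positivity) (by positivity)]
      calc (1+1:ℝ) * 2 ^ (k+n+1) = 2 ^ (k+n+2) := by rw [pow_succ]; ring
      _ ≤ 2 ^ (j+n+1) := pow_le_pow_right₀ (by norm_num) (by omega)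
      _ = 1 * 2 ^ (j+n+1) := (one_mul _).symm
    linarith
  -- assemble
  have hterm : ∀ k : ℕ, ENNReal.ofReal (1 / 2 ^ ((n+1)*n)) * ENNReal.ofReal ((2:ℝ) ^ (-c)) ^ k ≤
      ∫⁻ x in (T k).set, ENNReal.ofReal (‖x‖ ^ (-b)) := by
    intro k
    have hconst : ∫⁻ _x in (T k).set, ENNReal.ofReal (((2:ℝ) ^ k) ^ b) ≤
        ∫⁻ x in (T k).set, ENNReal.ofReal (‖x‖ ^ (-b)) :=
      setLIntegral_mono (meas_sigma b) (hpt k)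
    rw [setLIntegral_const, Cube.volume_set] at hconst
    refine le_trans (le_of_eq ?_) hconst
    have hside : (T k).side = 1 / 2 ^ (k+n+1) := rfl
    rw [hside, ← ENNReal.ofReal_pow (by positivity), ← ENNReal.ofReal_mul (by positivity),
      ← ENNReal.ofReal_mul (Real.rpow_nonneg (by positivity) b)]
    congr 1
    -- real identity
    have base2 : (0:ℝ) ≤ 2 := by norm_num
    have l1 : ((2:ℝ)^k)^b = 2^((k:ℝ)*b) := by
      rw [← Real.rpow_natCast 2 k, ← Real.rpow_mul base2]
    have l2 : ((1:ℝ)/2^(k+n+1))^n = 2^(-((((k+n+1)*n : ℕ)):ℝ)) := by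
      rw [one_div, inv_pow, ← pow_mul, ← Real.rpow_natCast 2 ((k+n+1)*n),
        ← Real.rpow_neg base2]
    have l3 : ((2:ℝ)^(-c))^k = 2^((-c)*(k:ℝ)) := by
      rw [← Real.rpow_natCast ((2:ℝ)^(-c)) k, ← Real.rpow_mul base2]
    have l4 : (1:ℝ)/2^((n+1)*n) = 2^(-((((n+1)*n : ℕ)):ℝ)) := by
      rw [one_div, ← Real.rpow_natCast 2 ((n+1)*n), ← Real.rpow_neg base2]
    rw [l1, l2, l3, l4, ← Real.rpow_add (by norm_num : (0:ℝ) < 2),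
      ← Real.rpow_add (by norm_num : (0:ℝ) < 2)]
    congr 1
    push_cast
    simp only [hc]
    ring
  have hmeas : ∀ k, MeasurableSet (T k).set := fun k => Cube.measurableSet _
  calc ENNReal.ofReal ((1 / 2 ^ ((n+1)*n)) * (1 / ((n:ℝ) - b)))
      = ENNReal.ofReal (1 / 2 ^ ((n+1)*n)) * ENNReal.ofReal (1 / c) := by
        rw [← ENNReal.ofReal_mul (by positivity)]
    _ ≤ ENNReal.ofReal (1 / 2 ^ ((n+1)*n)) * (1 - ENNReal.ofReal ((2:ℝ) ^ (-c)))⁻¹ := by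
        apply mul_le_mul_right
        have ht1 : 1 - (2:ℝ) ^ (-c) ≤ c := by
          have hexp : 1 - c * Real.log 2 ≤ (2:ℝ) ^ (-c) := by
            rw [Real.rpow_def_of_pos (by norm_num : (0:ℝ) < 2)]
            have := Real.add_one_le_exp (Real.log 2 * (-c))
            nlinarith [this]
          have hlog1 : Real.log 2 ≤ 1 := by
            have := Real.log_le_sub_one_of_pos (by norm_num : (0:ℝ) < 2)
            linarith
          nlinarith [hc0]
        have ht2 : ENNReal.ofReal c ≥ 1 - ENNReal.ofReal ((2:ℝ) ^ (-c)) := by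
          have h2c1 : (2:ℝ) ^ (-c) ≤ 1 := by
            rw [show (1:ℝ) = (2:ℝ) ^ (0:ℝ) by simp]
            apply Real.rpow_le_rpow_of_exponent_le (by norm_num)
            linarith
          calc 1 - ENNReal.ofReal ((2:ℝ) ^ (-c))
              = ENNReal.ofReal (1 - (2:ℝ) ^ (-c)) := by
                rw [← ENNReal.ofReal_one,
                  ← ENNReal.ofReal_sub _ (Real.rpow_nonneg (by norm_num) _)]
            _ ≤ ENNReal.ofReal c := ENNReal.ofReal_le_ofReal ht1
        calc ENNReal.ofReal (1 / c) = (ENNReal.ofReal c)⁻¹ := by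
              rw [one_div, ENNReal.ofReal_inv_of_pos hc0]
          _ ≤ (1 - ENNReal.ofReal ((2:ℝ) ^ (-c)))⁻¹ := ENNReal.inv_le_inv' ht2
    _ = ENNReal.ofReal (1 / 2 ^ ((n+1)*n)) * ∑' k : ℕ, ENNReal.ofReal ((2:ℝ) ^ (-c)) ^ k := by
        rw [ENNReal.tsum_geometric]
    _ = ∑' k : ℕ, ENNReal.ofReal (1 / 2 ^ ((n+1)*n)) * ENNReal.ofReal ((2:ℝ) ^ (-c)) ^ k :=
        ENNReal.tsum_mul_left.symm
    _ ≤ ∑' k : ℕ, ∫⁻ x in (T k).set, ENNReal.ofReal (‖x‖ ^ (-b)) :=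
        ENNReal.tsum_le_tsum hterm
    _ = ∫⁻ x in ⋃ k : ℕ, (T k).set, ENNReal.ofReal (‖x‖ ^ (-b)) :=
        (lintegral_iUnion hmeas hdisj _).symm
    _ ≤ wvol (fun x => ‖x‖ ^ (-b)) (unitCube n).set :=
        lintegral_mono_set (Set.iUnion_subset hTsub)

/-- Lower bound for the integral of `‖x‖^a` over the unit cube. -/
lemma wvol_v_unit_lower {n : ℕ} (hn : 0 < n) {a : ℝ} (ha0 : 0 ≤ a) :
    ENNReal.ofReal ((1/2 : ℝ) ^ a * (1/2 : ℝ) ^ n) ≤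
      wvol (fun x => ‖x‖ ^ a) (unitCube n).set := by
  set U : Cube n := ⟨WithLp.toLp 2 (fun _ => 1/2 : Fin n → ℝ), 1/2, by norm_num⟩ with hU
  have hUsub : U.set ⊆ (unitCube n).set := by
    intro x hx i
    rcases hx i with ⟨h1, h2⟩
    constructor
    · show (0:ℝ) ≤ x i
      have : U.corner i = 1/2 := rfl
      linarith [h1, this.symm.le]
    · show x i < 0 + 1
      have h3 : U.corner i + U.side = 1 := by norm_num [hU]
      linarith [h2, h3.symm.le]
  have hpt : ∀ x ∈ U.set, ENNReal.ofReal ((1/2 : ℝ) ^ a) ≤ ENNReal.ofReal (‖x‖ ^ a) := by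
    intro x hx
    apply ENNReal.ofReal_le_ofReal
    have i0 : Fin n := ⟨0, hn⟩
    have h1 : (1/2 : ℝ) ≤ ‖x‖ := by
      rcases hx ⟨0, hn⟩ with ⟨h1, _⟩
      have hcor : U.corner ⟨0, hn⟩ = 1/2 := rfl
      calc (1/2 : ℝ) = U.corner ⟨0, hn⟩ := hcor.symm
      _ ≤ x ⟨0, hn⟩ := h1
      _ ≤ |x ⟨0, hn⟩| := le_abs_self _
      _ ≤ ‖x‖ := abs_coord_le_norm x _
    exact Real.rpow_le_rpow (by norm_num) h1 ha0
  have hconst : ∫⁻ _x in U.set, ENNReal.ofReal ((1/2 : ℝ) ^ a) ≤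
      ∫⁻ x in U.set, ENNReal.ofReal (‖x‖ ^ a) :=
    setLIntegral_mono ((measurable_norm.pow measurable_const).ennreal_ofReal) hpt
  rw [setLIntegral_const, Cube.volume_set] at hconst
  calc ENNReal.ofReal ((1/2 : ℝ) ^ a * (1/2 : ℝ) ^ n)
      = ENNReal.ofReal ((1/2 : ℝ) ^ a) * ENNReal.ofReal (U.side ^ n) := by
        rw [← ENNReal.ofReal_mul (Real.rpow_nonneg (by norm_num) a)]
    _ ≤ ∫⁻ x in U.set, ENNReal.ofReal (‖x‖ ^ a) := hconst
    _ ≤ wvol (fun x => ‖x‖ ^ a) (unitCube n).set := lintegral_mono_set hUsub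


/-- Supremum bound for the average of `‖x‖^a`. -/
lemma wvol_v_le {n : ℕ} (hn : 0 < n) {a : ℝ} (ha : 0 ≤ a) (Q : Cube n) :
    wvol (fun x => ‖x‖ ^ a) Q.set ≤ ENNReal.ofReal (Q.R ^ a) * volume Q.set := by
  have hpt : ∀ x ∈ Q.set, ENNReal.ofReal (‖x‖ ^ a) ≤ ENNReal.ofReal (Q.R ^ a) :=
    fun x hx => ENNReal.ofReal_le_ofReal
      (Real.rpow_le_rpow (norm_nonneg x) (Q.norm_lt_R hn hx).le ha)
  calc wvol (fun x => ‖x‖ ^ a) Q.set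
      ≤ ∫⁻ _x in Q.set, ENNReal.ofReal (Q.R ^ a) := setLIntegral_mono measurable_const hpt
    _ = ENNReal.ofReal (Q.R ^ a) * volume Q.set := setLIntegral_const _ _

lemma avg_le_of {n : ℕ} {w : Rn n → ℝ} {Q : Cube n} {A : ℝ≥0∞}
    (h : wvol w Q.set ≤ A * volume Q.set) : avg w Q ≤ A :=
  ENNReal.div_le_of_le_mul h

lemma avg_unit {n : ℕ} (w : Rn n → ℝ) : avg w (unitCube n) = wvol w (unitCube n).set := by
  unfold avg
  rw [Cube.volume_set]
  show wvol w (unitCube n).set / ENNReal.ofReal ((1:ℝ) ^ n) = _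
  simp

lemma prod_rpow_sum {m : ℕ} (x : ℝ≥0∞) (f : Fin m → ℝ) (hf : ∀ i, 0 ≤ f i) :
    ∏ i, x ^ f i = x ^ (∑ i, f i) := by
  classical
  induction (Finset.univ : Finset (Fin m)) using Finset.cons_induction with
  | empty => simp
  | cons i s hi ih =>
    rw [Finset.prod_cons, Finset.sum_cons, ih,
      ENNReal.rpow_add_of_nonneg (f i) (∑ j ∈ s, f j) (hf i) (Finset.sum_nonneg fun j _ => hf j)]

/-- **Power weights: computation of the multiple `A_{P⃗}` constant and `A_∞` constants.** -/
theorem power_weight_constants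
    (n m : ℕ) (hn : 0 < n) (hm : 0 < m) (p : ℝ) (P : Fin m → ℝ)
    (hP : ∀ i, 1 < P i) (hsum : 1 / p = ∑ i, 1 / P i) :
    ∃ c C : ℝ≥0∞, 0 < c ∧ C ≠ ∞ ∧
      ∀ ε : ℝ, 0 < ε → ε < 1 →
        (∀ x : Rn n,
            vweight p P (fun i (x : Rn n) => ‖x‖ ^ ((n - ε) * (P i - 1))) x =
              ‖x‖ ^ ((n - ε) * (m * p - 1))) ∧
        APConst p P (fun i (x : Rn n) => ‖x‖ ^ ((n - ε) * (P i - 1))) =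
            ArConst (m * p) (fun x : Rn n => ‖x‖ ^ ((n - ε) * (m * p - 1))) ∧
        c * ENNReal.ofReal (1 / ε) ^ (m * p - 1) ≤
            APConst p P (fun i (x : Rn n) => ‖x‖ ^ ((n - ε) * (P i - 1))) ∧
        APConst p P (fun i (x : Rn n) => ‖x‖ ^ ((n - ε) * (P i - 1))) ≤
            C * ENNReal.ofReal (1 / ε) ^ (m * p - 1) ∧
        ∀ i, AinfConst (sigmaW P (fun i (x : Rn n) => ‖x‖ ^ ((n - ε) * (P i - 1))) i) ≤
            C * ENNReal.ofReal (1 / ε) := by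
  have hn1 : (1:ℝ) ≤ n := by exact_mod_cast hn
  have hPpos : ∀ i, (0:ℝ) < P i := fun i => lt_trans one_pos (hP i)
  have hPi1 : ∀ i, (0:ℝ) < P i - 1 := fun i => by linarith [hP i]
  have huniv : (Finset.univ : Finset (Fin m)).Nonempty :=
    Finset.univ_nonempty_iff.mpr ⟨⟨0, hm⟩⟩
  have hp0 : 0 < p := by
    have hs : 0 < ∑ i, 1 / P i :=
      Finset.sum_pos (fun i _ => one_div_pos.mpr (hPpos i)) huniv
    rw [← hsum] at hs
    exact one_div_pos.mp hs
  have hmp1 : 1 < (m:ℝ) * p := by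
    have hlt : ∑ i, 1 / P i < ∑ _i : Fin m, (1:ℝ) := by
      apply Finset.sum_lt_sum_of_nonempty huniv
      intro i _
      rw [div_lt_one (hPpos i)]
      exact hP i
    have hm' : ∑ _i : Fin m, (1:ℝ) = m := by
      rw [Finset.sum_const, Finset.card_univ, Fintype.card_fin, nsmul_eq_mul, mul_one]
    have hsm : 1 / p < m := by rw [hsum]; rw [hm'] at hlt; exact hlt
    have := (div_lt_iff₀ hp0).mp hsm
    linarith
  set mp : ℝ := (m:ℝ) * p with hmpdef
  have hmp0 : 0 < mp - 1 := by simp only [hmpdef]; linarith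
  -- exponent sums
  have hexp_eq : ∀ i, p / conj (P i) = p - p * (1 / P i) := by
    intro i
    unfold conj
    rw [div_div_eq_mul_div]
    have h5 : P i ≠ 0 := (hPpos i).ne'
    field_simp
  have hexp_sum : ∑ i, p / conj (P i) = mp - 1 := by
    rw [Finset.sum_congr rfl (fun i _ => hexp_eq i), Finset.sum_sub_distrib,
      Finset.sum_const, Finset.card_univ, Fintype.card_fin, ← Finset.mul_sum, ← hsum,
      mul_one_div_cancel hp0.ne', nsmul_eq_mul, hmpdef]
  have hexp_nonneg : ∀ i, 0 ≤ p / conj (P i) := by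
    intro i
    rw [hexp_eq i]
    have h1 : 1 / P i ≤ 1 := by
      rw [div_le_one (hPpos i)]; linarith [hP i]
    nlinarith [hp0, one_div_pos.mpr (hPpos i)]
  -- the constants
  refine ⟨ENNReal.ofReal ((1/2:ℝ) ^ ((n:ℝ) * (mp - 1)) * (1/2:ℝ) ^ n) *
      ENNReal.ofReal ((1:ℝ) / 2 ^ ((n+1)*n)) ^ (mp - 1),
    ENNReal.ofReal (Kn n) ^ (mp - 1) + ENNReal.ofReal (Kn n), ?_, ?_, ?_⟩
  · apply ENNReal.mul_pos
    · exact (ENNReal.ofReal_pos.mpr (by positivity)).ne'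
    · exact (ENNReal.rpow_pos (ENNReal.ofReal_pos.mpr (by positivity))
        ENNReal.ofReal_ne_top).ne'
  · rw [ENNReal.add_ne_top]
    exact ⟨ENNReal.rpow_ne_top_of_nonneg hmp0.le ENNReal.ofReal_ne_top,
      ENNReal.ofReal_ne_top⟩
  intro ε hε0 hε1
  set w : Fin m → Rn n → ℝ := fun i (x : Rn n) => ‖x‖ ^ (((n:ℝ) - ε) * (P i - 1)) with hwdef
  set b : ℝ := (n:ℝ) - ε with hbdef
  have hb0 : 0 ≤ b := by simp only [hbdef]; linarith
  have hb1 : (n:ℝ) - 1 < b := by simp only [hbdef]; linarith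
  have hb2 : b < n := by simp only [hbdef]; linarith
  have hnb : (n:ℝ) - b = ε := by simp only [hbdef]; ring
  set a : ℝ := b * (mp - 1) with hadef
  have ha0 : 0 ≤ a := mul_nonneg hb0 hmp0.le
  set σfun : Rn n → ℝ := fun x => ‖x‖ ^ (-b) with hσdef
  set vfun : Rn n → ℝ := fun x => ‖x‖ ^ (b * (mp - 1)) with hvdef
  -- identification of sigma weights
  have hσ : ∀ i, sigmaW P w i = σfun := by
    intro i
    funext x
    show (‖x‖ ^ (b * (P i - 1))) ^ (1 - conj (P i)) = ‖x‖ ^ (-b)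
    rw [← Real.rpow_mul (norm_nonneg x)]
    congr 1
    unfold conj
    have h1 : P i - 1 ≠ 0 := (hPi1 i).ne'
    field_simp
    ring
  -- identification of v weight
  have hv : vweight p P w = vfun := by
    funext x
    show ∏ i, (‖x‖ ^ (b * (P i - 1))) ^ (p / P i) = ‖x‖ ^ (b * (mp - 1))
    have h1 : ∀ i ∈ Finset.univ, (‖x‖ ^ (b * (P i - 1))) ^ (p / P i) =
        ‖x‖ ^ (b * (P i - 1) * (p / P i)) :=
      fun i _ => (Real.rpow_mul (norm_nonneg x) _ _).symm
    rw [Finset.prod_congr rfl h1,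
      ← Real.rpow_sum_of_nonneg (norm_nonneg x)
        (fun i _ => by
          have := hexp_nonneg i
          rw [hexp_eq i] at this
          have h2 : 0 ≤ p / P i := div_nonneg hp0.le (hPpos i).le
          have h3 : (0:ℝ) ≤ P i - 1 := (hPi1 i).le
          positivity)]
    congr 1
    have h4 : ∀ i ∈ Finset.univ, b * (P i - 1) * (p / P i) = b * (p - p * (1 / P i)) := by
      intro i _
      have h5 : P i ≠ 0 := (hPpos i).ne'
      field_simp
    rw [Finset.sum_congr rfl h4, ← Finset.mul_sum, Finset.sum_sub_distrib,
      Finset.sum_const, Finset.card_univ, Fintype.card_fin, ← Finset.mul_sum, ← hsum,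
      mul_one_div_cancel hp0.ne', nsmul_eq_mul, hmpdef]
  -- the common supremum description
  have hAP : APConst p P w = ⨆ Q : Cube n, avg vfun Q * avg σfun Q ^ (mp - 1) := by
    unfold APConst
    apply iSup_congr
    intro Q
    rw [hv]
    congr 1
    calc ∏ i, avg (sigmaW P w i) Q ^ (p / conj (P i))
        = ∏ i, avg σfun Q ^ (p / conj (P i)) :=
          Finset.prod_congr rfl (fun i _ => by rw [hσ i])
      _ = avg σfun Q ^ (∑ i, p / conj (P i)) := prod_rpow_sum _ _ hexp_nonneg
      _ = avg σfun Q ^ (mp - 1) := by rw [hexp_sum]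
  have hvconj : (fun x : Rn n => vfun x ^ (1 - conj mp)) = σfun := by
    funext x
    show (‖x‖ ^ (b * (mp - 1))) ^ (1 - conj mp) = ‖x‖ ^ (-b)
    rw [← Real.rpow_mul (norm_nonneg x)]
    congr 1
    unfold conj
    have h1 : mp - 1 ≠ 0 := hmp0.ne'
    field_simp
    ring
  have hAr : ArConst mp vfun = ⨆ Q : Cube n, avg vfun Q * avg σfun Q ^ (mp - 1) := by
    unfold ArConst
    apply iSup_congr
    intro Q
    rw [hvconj]
  -- per-cube upper bounds
  have hσavg : ∀ Q : Cube n, avg σfun Q ≤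
      ENNReal.ofReal (Kn n / ε) * ENNReal.ofReal (Q.R ^ (-b)) := by
    intro Q
    apply avg_le_of
    have h := wvol_rpow_neg_le hn hb1 hb2 Q
    rw [hnb] at h
    exact h
  have hvavg : ∀ Q : Cube n, avg vfun Q ≤ ENNReal.ofReal (Q.R ^ a) := by
    intro Q
    apply avg_le_of
    have h := wvol_v_le hn ha0 Q
    exact h
  have hupper_term : ∀ Q : Cube n, avg vfun Q * avg σfun Q ^ (mp - 1) ≤
      ENNReal.ofReal (Kn n / ε) ^ (mp - 1) := by
    intro Q
    have hR := Q.R_pos hn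
    calc avg vfun Q * avg σfun Q ^ (mp - 1)
        ≤ ENNReal.ofReal (Q.R ^ a) *
            (ENNReal.ofReal (Kn n / ε) * ENNReal.ofReal (Q.R ^ (-b))) ^ (mp - 1) :=
          mul_le_mul' (hvavg Q) (ENNReal.rpow_le_rpow (hσavg Q) hmp0.le)
      _ = ENNReal.ofReal (Kn n / ε) ^ (mp - 1) *
            (ENNReal.ofReal (Q.R ^ a) * ENNReal.ofReal (Q.R ^ (-b)) ^ (mp - 1)) := by
          rw [ENNReal.mul_rpow_of_nonneg _ _ hmp0.le]
          ring
      _ = ENNReal.ofReal (Kn n / ε) ^ (mp - 1) := by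
          have e0 : ENNReal.ofReal (Q.R ^ (-b)) ^ (mp - 1) =
              ENNReal.ofReal ((Q.R ^ (-b)) ^ (mp - 1)) :=
            ENNReal.ofReal_rpow_of_pos (Real.rpow_pos_of_pos hR _)
          have e1 : (Q.R ^ (-b)) ^ (mp - 1) = Q.R ^ (-a) := by
            rw [← Real.rpow_mul hR.le]
            congr 1
            simp only [hadef]
            ring
          have e2 : Q.R ^ a * Q.R ^ (-a) = 1 := by
            rw [← Real.rpow_add hR]
            simp
          rw [e0, e1, ← ENNReal.ofReal_mul (Real.rpow_nonneg hR.le a), e2,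
            ENNReal.ofReal_one, mul_one]
  have hsplit : ENNReal.ofReal (Kn n / ε) =
      ENNReal.ofReal (Kn n) * ENNReal.ofReal (1 / ε) := by
    rw [← ENNReal.ofReal_mul (Kn_pos hn).le, mul_one_div]
  -- lower bound at the unit cube
  have hvlow : ENNReal.ofReal ((1/2:ℝ) ^ ((n:ℝ) * (mp - 1)) * (1/2:ℝ) ^ n) ≤
      avg vfun (unitCube n) := by
    rw [avg_unit]
    refine le_trans ?_ (wvol_v_unit_lower hn ha0)
    apply ENNReal.ofReal_le_ofReal
    apply mul_le_mul_of_nonneg_right _ (by positivity)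
    apply Real.rpow_le_rpow_of_exponent_ge (by norm_num) (by norm_num)
    show a ≤ (n:ℝ) * (mp - 1)
    rw [hadef]
    nlinarith [hb2, hmp0]
  have hσlow : ENNReal.ofReal ((1:ℝ) / 2 ^ ((n+1)*n)) * ENNReal.ofReal (1 / ε) ≤
      avg σfun (unitCube n) := by
    rw [avg_unit]
    refine le_trans ?_ (wvol_unit_lower hn hb0 hb2)
    rw [hnb, ← ENNReal.ofReal_mul (by positivity)]
  -- maximal function bound
  have hmax : ∀ Q : Cube n,
      (∫⁻ x in Q.set, maximal (Q.set.indicator σfun) x) ≤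
        ENNReal.ofReal (Kn n / ε) * wvol σfun Q.set := by
    intro Q
    have hptm : ∀ x : Rn n, x ≠ 0 → maximal (Q.set.indicator σfun) x ≤
        ENNReal.ofReal (Kn n / ε) * ENNReal.ofReal (‖x‖ ^ (-b)) := by
      intro x hx0
      apply iSup₂_le
      intro Q' hx'
      have h1 : avg (Q.set.indicator σfun) Q' ≤ avg σfun Q' := by
        unfold avg
        apply ENNReal.div_le_div_right
        unfold wvol
        apply lintegral_mono
        intro y
        apply ENNReal.ofReal_le_ofReal
        exact Set.indicator_le_self'
          (fun z _ => Real.rpow_nonneg (norm_nonneg z) _) y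
      have h3 : ENNReal.ofReal (Q'.R ^ (-b)) ≤ ENNReal.ofReal (‖x‖ ^ (-b)) :=
        ENNReal.ofReal_le_ofReal
          (rpow_neg_anti (norm_pos_iff.mpr hx0) (Q'.norm_lt_R hn hx').le hb0)
      exact le_trans h1 (le_trans (hσavg Q') (mul_le_mul_right h3 _))
    calc ∫⁻ x in Q.set, maximal (Q.set.indicator σfun) x
        ≤ ∫⁻ x in (Q.set \ {0}) ∪ ({0} : Set (Rn n)),
            maximal (Q.set.indicator σfun) x := by
          apply lintegral_mono_set
          intro x hx
          by_cases h : x = 0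
          · exact Or.inr h
          · exact Or.inl ⟨hx, h⟩
      _ ≤ (∫⁻ x in Q.set \ {0}, maximal (Q.set.indicator σfun) x) +
            ∫⁻ x in ({0} : Set (Rn n)), maximal (Q.set.indicator σfun) x :=
          lintegral_union_le _ _ _
      _ ≤ (∫⁻ x in Q.set \ {0},
            ENNReal.ofReal (Kn n / ε) * ENNReal.ofReal (‖x‖ ^ (-b))) + 0 := by
          apply add_le_add
          · exact setLIntegral_mono (measurable_const.mul (meas_sigma b))
              (fun x hx => hptm x hx.2)
          · rw [setLIntegral_measure_zero _ _ (volume_singleton_zero hn)]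
      _ = ENNReal.ofReal (Kn n / ε) *
            ∫⁻ x in Q.set \ {0}, ENNReal.ofReal (‖x‖ ^ (-b)) := by
          rw [add_zero, lintegral_const_mul _ (meas_sigma b)]
      _ ≤ ENNReal.ofReal (Kn n / ε) * wvol σfun Q.set :=
          mul_le_mul_right (lintegral_mono_set Set.diff_subset) _
  refine ⟨fun x => congrFun hv x, ?_, ?_, ?_, ?_⟩
  · -- equality with ArConst
    rw [hAP, hAr]
  · -- lower bound
    rw [hAP]
    calc ENNReal.ofReal ((1/2:ℝ) ^ ((n:ℝ) * (mp - 1)) * (1/2:ℝ) ^ n) *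
          ENNReal.ofReal ((1:ℝ) / 2 ^ ((n+1)*n)) ^ (mp - 1) *
          ENNReal.ofReal (1 / ε) ^ (mp - 1)
        = ENNReal.ofReal ((1/2:ℝ) ^ ((n:ℝ) * (mp - 1)) * (1/2:ℝ) ^ n) *
            (ENNReal.ofReal ((1:ℝ) / 2 ^ ((n+1)*n)) * ENNReal.ofReal (1 / ε)) ^ (mp - 1) := by
          rw [ENNReal.mul_rpow_of_nonneg _ _ hmp0.le, mul_assoc]
      _ ≤ avg vfun (unitCube n) * avg σfun (unitCube n) ^ (mp - 1) :=
          mul_le_mul' hvlow (ENNReal.rpow_le_rpow hσlow hmp0.le)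
      _ ≤ ⨆ Q : Cube n, avg vfun Q * avg σfun Q ^ (mp - 1) :=
          le_iSup (fun Q : Cube n => avg vfun Q * avg σfun Q ^ (mp - 1)) (unitCube n)
  · -- upper bound
    rw [hAP]
    apply iSup_le
    intro Q
    refine le_trans (hupper_term Q) ?_
    calc ENNReal.ofReal (Kn n / ε) ^ (mp - 1)
        = ENNReal.ofReal (Kn n) ^ (mp - 1) * ENNReal.ofReal (1 / ε) ^ (mp - 1) := by
          rw [hsplit, ENNReal.mul_rpow_of_nonneg _ _ hmp0.le]
      _ ≤ (ENNReal.ofReal (Kn n) ^ (mp - 1) + ENNReal.ofReal (Kn n)) *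
            ENNReal.ofReal (1 / ε) ^ (mp - 1) :=
          mul_le_mul_left le_self_add _
  · -- A infinity bounds
    intro i
    rw [hσ i]
    unfold AinfConst
    apply iSup_le
    intro Q
    refine le_trans (ENNReal.div_le_of_le_mul (hmax Q)) ?_
    rw [hsplit]
    exact mul_le_mul_left le_add_self _

end Paper
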